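/- Let k be a field of characteristic p > 0, n ≥ 1, and A an n×n matrix over k[[z]] such that D_A^p = 0 (the connection d/dz + A has vanishing p-curvature). Then there exists an invertible n×n matrix U over k[[z]] with U′ + A·U = 0; i.e. the columns of U form a basis of horizontal sections. (This is the local, rank-n case of Cartier descent, Lemma A.1 of the paper.) -/

import Mathlib

open PowerSeries

/-- The formal derivative `d/dz` on `k⟦z⟧`. -/
noncomputable def pd (k : Type*) [CommRing k] (f : PowerSeries k) : PowerSeries k :=
  PowerSeries.derivative k f

/-- Entrywise formal derivative of a matrix over `k⟦z⟧`. -/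
noncomputable def matD (k : Type*) [CommRing k] {n : ℕ}
    (B : Matrix (Fin n) (Fin n) (PowerSeries k)) : Matrix (Fin n) (Fin n) (PowerSeries k) :=
  fun i j => pd k (B i j)

/-- The connection operator `D_A = d/dz + A` acting on `k⟦z⟧ⁿ`: `D_A(v) = v′ + A·v`. -/
noncomputable def connOp (k : Type*) [CommRing k] {n : ℕ}
    (A : Matrix (Fin n) (Fin n) (PowerSeries k)) :
    (Fin n → PowerSeries k) → (Fin n → PowerSeries k) :=
  fun v => (fun i => pd k (v i)) + A.mulVec v

section Aux
variable {k : Type*} [Field k] {n : ℕ}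

lemma pd_mul (f g : PowerSeries k) : pd k (f * g) = f * pd k g + g * pd k f := by
  simpa [pd, smul_eq_mul] using (PowerSeries.derivative k).leibniz f g

lemma pd_X_pow (i : ℕ) : pd k ((X : PowerSeries k) ^ (i + 1)) = C ((i : k) + 1) * X ^ i := by
  induction i with
  | zero => simp [pd]
  | succ i ih =>
    have hX : pd k (X : PowerSeries k) = 1 := by simp [pd]
    rw [pow_succ, pd_mul, ih, hX]
    have hc : (C) (((i + 1 : ℕ) : k) + 1) = C ((i : k) + 1) + 1 := by
      rw [show (((i + 1 : ℕ) : k) + 1) = ((i : k) + 1) + 1 by push_cast; ring, map_add, map_one]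
    rw [hc]
    ring

noncomputable def Dmat (A M : Matrix (Fin n) (Fin n) (PowerSeries k)) :
    Matrix (Fin n) (Fin n) (PowerSeries k) := matD k M + A * M

lemma Dmat_col (A : Matrix (Fin n) (Fin n) (PowerSeries k)) (i : ℕ)
    (M : Matrix (Fin n) (Fin n) (PowerSeries k)) (j : Fin n) :
    (fun r => (Dmat A)^[i] M r j) = (connOp k A)^[i] (fun r => M r j) := by
  induction i generalizing M with
  | zero => rfl
  | succ i ih =>
    rw [Function.iterate_succ_apply, Function.iterate_succ_apply, ih (Dmat A M)]
    refine congrArg _ ?_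
    funext r
    simp [Dmat, connOp, matD, Matrix.add_apply, Matrix.mul_apply, Matrix.mulVec,
      dotProduct, Pi.add_apply]

lemma Dmat_add (A M N : Matrix (Fin n) (Fin n) (PowerSeries k)) :
    Dmat A (M + N) = Dmat A M + Dmat A N := by
  have h : matD k (M + N) = matD k M + matD k N := by
    ext i j; simp [matD, pd, Matrix.add_apply, map_add]
  simp only [Dmat, h, Matrix.mul_add]; abel

lemma Dmat_zero (A : Matrix (Fin n) (Fin n) (PowerSeries k)) : Dmat A 0 = 0 := by
  have h : matD k (0 : Matrix (Fin n) (Fin n) (PowerSeries k)) = 0 := by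
    ext i j; simp [matD, pd]
  simp [Dmat, h]

lemma Dmat_sum {ι : Type*} (A : Matrix (Fin n) (Fin n) (PowerSeries k)) (s : Finset ι)
    (f : ι → Matrix (Fin n) (Fin n) (PowerSeries k)) :
    Dmat A (∑ i ∈ s, f i) = ∑ i ∈ s, Dmat A (f i) := by
  classical
  induction s using Finset.induction with
  | empty => simpa using Dmat_zero A
  | insert _ _ h ih => rw [Finset.sum_insert h, Finset.sum_insert h, Dmat_add, ih]

lemma Dmat_smul (A M : Matrix (Fin n) (Fin n) (PowerSeries k)) (f : PowerSeries k) :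
    Dmat A (f • M) = pd k f • M + f • Dmat A M := by
  have h : A * (f • M) = f • (A * M) := Matrix.mul_smul A f M
  ext i j
  simp only [Dmat, Matrix.add_apply, Matrix.smul_apply, matD, smul_eq_mul, h]
  rw [pd_mul]
  ring

lemma fact_ne_zero (p : ℕ) [Fact p.Prime] [CharP k p] {m : ℕ} (h : m < p) :
    ((m.factorial : k)) ≠ 0 := by
  rw [Ne, CharP.cast_eq_zero_iff k p]
  exact fun hd => absurd ((Nat.Prime.dvd_factorial Fact.out).mp hd) (not_le.mpr h)

end Aux

/-- **Local Cartier descent.** If the connection `d/dz + A` has vanishing `p`-curvature,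
then there is an invertible matrix `U` over `k⟦z⟧` with `U′ + A·U = 0`, i.e. whose
columns form a basis of horizontal sections. -/

theorem cartier_descent_local (k : Type*) [Field k] (p : ℕ) [Fact p.Prime] [CharP k p]
    (n : ℕ) (hn : 1 ≤ n) (A : Matrix (Fin n) (Fin n) (PowerSeries k))
    (hA : ∀ v : Fin n → PowerSeries k, (connOp k A)^[p] v = 0) :
    ∃ U : Matrix (Fin n) (Fin n) (PowerSeries k),
      IsUnit U.det ∧ matD k U + A * U = 0 := by
  classical
  obtain ⟨m, hm⟩ : ∃ m, p = m + 1 :=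
    ⟨p - 1, (Nat.succ_pred_eq_of_pos (Fact.out : p.Prime).pos).symm⟩
  subst hm
  set a : ℕ → k := fun i => (-1 : k) ^ i * ((i.factorial : k))⁻¹ with ha_def
  set c : ℕ → PowerSeries k := fun i => C (a i) * X ^ i with hc_def
  have hDp : (Dmat A)^[m + 1] (1 : Matrix (Fin n) (Fin n) (PowerSeries k)) = 0 := by
    apply Matrix.ext
    intro i j
    rw [Matrix.zero_apply]
    have h := congrFun (Dmat_col A (m + 1) (1 : Matrix (Fin n) (Fin n) (PowerSeries k)) j) i
    rw [hA] at h
    simpa using h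
  have hc0 : pd k (c 0) = 0 := by simp [hc_def, pd]
  have hcder : ∀ i, i + 1 < m + 1 → pd k (c (i + 1)) = -(c i) := by
    intro i hi
    have hfi : ((i.factorial : k)) ≠ 0 := fact_ne_zero (m + 1) (lt_trans (Nat.lt_succ_self i) hi)
    have hfi1 : (((i + 1).factorial : k)) ≠ 0 := fact_ne_zero (m + 1) hi
    have hi1 : ((i : k) + 1) ≠ 0 := by
      have : (((i + 1 : ℕ)) : k) ≠ 0 := by
        rw [Ne, CharP.cast_eq_zero_iff k (m + 1)]
        exact fun hd => absurd (Nat.le_of_dvd (Nat.succ_pos i) hd) (not_le.mpr hi)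
      simpa using this
    have key : a (i + 1) * ((i : k) + 1) = -(a i) := by
      have hfs : (((i + 1).factorial : ℕ) : k) = ((i : k) + 1) * ((i.factorial : ℕ) : k) := by
        rw [Nat.factorial_succ]; push_cast; ring
      have ha1 : a (i + 1) = (-1 : k) ^ i * (-1) * (((i : k) + 1)⁻¹ * ((i.factorial : k))⁻¹) := by
        rw [ha_def]; simp only; rw [hfs, mul_inv, pow_succ]
      rw [ha1, ha_def]
      simp only
      field_simp
    have hCder : pd k (C (a (i + 1))) = 0 := by simp [pd]
    calc pd k (c (i + 1)) = C (a (i + 1)) * (C ((i : k) + 1) * X ^ i) := by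
          rw [hc_def]
          simp only
          rw [pd_mul, hCder, mul_zero, add_zero, pd_X_pow]
      _ = C (a (i + 1) * ((i : k) + 1)) * X ^ i := by rw [map_mul (C) (a (i + 1)) ((i : k) + 1), mul_assoc]
      _ = -(c i) := by rw [key, map_neg, hc_def]; simp only; rw [neg_mul]
  set U : Matrix (Fin n) (Fin n) (PowerSeries k) :=
    ∑ i ∈ Finset.range (m + 1),
      c i • (Dmat A)^[i] (1 : Matrix (Fin n) (Fin n) (PowerSeries k)) with hU_def
  refine ⟨U, ?_, ?_⟩
  · rw [PowerSeries.isUnit_iff_constantCoeff, RingHom.map_det, RingHom.mapMatrix_apply]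
    have hU1 : U.map (constantCoeff) = (1 : Matrix (Fin n) (Fin n) k) := by
      ext i j
      rw [Matrix.map_apply, hU_def, Matrix.sum_apply, map_sum, Finset.sum_range_succ']
      have hz : ∀ l, constantCoeff
          ((c (l + 1) • (Dmat A)^[l + 1] (1 : Matrix (Fin n) (Fin n) (PowerSeries k))) i j) = 0 := by
        intro l
        rw [Matrix.smul_apply, smul_eq_mul, hc_def]
        simp only
        rw [map_mul, map_mul, map_pow, constantCoeff_X]
        simp
      rw [Finset.sum_congr rfl fun l _ => hz l, Finset.sum_const, smul_zero, zero_add]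
      rw [Matrix.smul_apply, smul_eq_mul, hc_def]
      simp only
      rw [Function.iterate_zero_apply, pow_zero, mul_one]
      have ha0 : a 0 = 1 := by simp [ha_def]
      rw [ha0, map_one, one_mul]
      by_cases h : i = j <;> simp [Matrix.one_apply, h]
    rw [hU1, Matrix.det_one]
    exact isUnit_one
  · change Dmat A U = 0
    rw [hU_def, Dmat_sum]
    have hterm : ∀ i, Dmat A (c i • (Dmat A)^[i] (1 : Matrix (Fin n) (Fin n) (PowerSeries k)))
        = pd k (c i) • (Dmat A)^[i] (1 : Matrix (Fin n) (Fin n) (PowerSeries k))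
          + c i • (Dmat A)^[i + 1] (1 : Matrix (Fin n) (Fin n) (PowerSeries k)) := by
      intro i
      rw [Dmat_smul, ← Function.iterate_succ_apply' (Dmat A) i 1]
    rw [Finset.sum_congr rfl fun i _ => hterm i, Finset.sum_add_distrib]
    have h1 : ∑ i ∈ Finset.range (m + 1),
        pd k (c i) • (Dmat A)^[i] (1 : Matrix (Fin n) (Fin n) (PowerSeries k))
        = -∑ i ∈ Finset.range m,
            c i • (Dmat A)^[i + 1] (1 : Matrix (Fin n) (Fin n) (PowerSeries k)) := by
      rw [Finset.sum_range_succ', hc0, zero_smul, add_zero, ← Finset.sum_neg_distrib]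
      refine Finset.sum_congr rfl fun i hi => ?_
      rw [hcder i (Nat.succ_lt_succ (Finset.mem_range.mp hi)), neg_smul]
    have h2 : ∑ i ∈ Finset.range (m + 1),
        c i • (Dmat A)^[i + 1] (1 : Matrix (Fin n) (Fin n) (PowerSeries k))
        = ∑ i ∈ Finset.range m,
            c i • (Dmat A)^[i + 1] (1 : Matrix (Fin n) (Fin n) (PowerSeries k)) := by
      rw [Finset.sum_range_succ, hDp, smul_zero, add_zero]
    rw [h1, h2, neg_add_cancel]
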